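/- Let T>0, θ∈(0,1), C>0, and let P be a polynomial with nonnegative coefficients and P(0)=0. Suppose φ:[0,T]→ℝ₊ is bounded measurable and satisfies 0 ≤ φ(t) ≤ φ(0) + P(t) + (C/Γ(θ)) ∫₀ᵗ (t−s)^{θ−1} φ(s) ds for all t∈[0,T]. Then there exists a constant C_T depending only on T, θ, C such that φ(t) ≤ C_T φ(0) + C_T P(t) for all t∈[0,T]. -/

import Mathlib

open MeasureTheory Set

private lemma polyMono (P : Polynomial ℝ) (hP : ∀ k, 0 ≤ P.coeff k)
    {x y : ℝ} (hx : 0 ≤ x) (hxy : x ≤ y) : P.eval x ≤ P.eval y := by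
  rw [Polynomial.eval_eq_sum_range, Polynomial.eval_eq_sum_range]
  exact Finset.sum_le_sum fun i _ =>
    mul_le_mul_of_nonneg_left (pow_le_pow_left₀ hx hxy i) (hP i)

private noncomputable def gronB (K : ℝ) : ℕ → ℝ
  | 0 => 1
  | n+1 => 2 * (1 + K * gronB K n)

private lemma gronB_ge_one {K : ℝ} (hK : 0 ≤ K) : ∀ n, 1 ≤ gronB K n
  | 0 => le_refl 1
  | n+1 => by
    have := gronB_ge_one hK n
    simp only [gronB]
    nlinarith

set_option maxHeartbeats 1000000 in
/-- Modified fractional Gronwall lemma. -/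
theorem modified_fractional_gronwall
    (T θ C : ℝ) (hT : 0 < T) (hθ : θ ∈ Set.Ioo (0:ℝ) 1) (hC : 0 < C) :
    ∃ CT : ℝ, ∀ (φ : ℝ → ℝ) (P : Polynomial ℝ),
      (∀ k, 0 ≤ P.coeff k) → P.coeff 0 = 0 →
      Measurable φ →
      (∀ t ∈ Set.Icc (0:ℝ) T, 0 ≤ φ t) →
      (∃ M : ℝ, ∀ t ∈ Set.Icc (0:ℝ) T, φ t ≤ M) →
      (∀ t ∈ Set.Icc (0:ℝ) T,
        φ t ≤ φ 0 + P.eval t + (C / Real.Gamma θ) * ∫ s in (0:ℝ)..t, (t - s) ^ (θ - 1) * φ s) →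
      ∀ t ∈ Set.Icc (0:ℝ) T, φ t ≤ CT * φ 0 + CT * P.eval t := by
  obtain ⟨hθ0, hθ1⟩ := hθ
  have hΓ : 0 < Real.Gamma θ := Real.Gamma_pos_of_pos hθ0
  set c : ℝ := C / Real.Gamma θ with hc_def
  have hc : 0 < c := div_pos hC hΓ
  set h : ℝ := (θ / (2 * c)) ^ θ⁻¹ with hh_def
  have hhpos : 0 < h := Real.rpow_pos_of_pos (div_pos hθ0 (by positivity)) _
  have hhθ : h ^ θ = θ / (2 * c) := by
    rw [hh_def, Real.rpow_inv_rpow (by positivity) hθ0.ne']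
  have hhalf : c * h ^ θ / θ = 1 / 2 := by
    rw [hhθ]; field_simp
  set K : ℝ := c * h ^ (θ - 1) * T with hK_def
  have hK : 0 ≤ K := by positivity
  set n₀ : ℕ := ⌈T / h⌉₊ with hn₀_def
  have hn₀ : T ≤ n₀ * h := by
    have := Nat.le_ceil (T / h)
    calc T = T / h * h := by field_simp
    _ ≤ n₀ * h := by
      apply mul_le_mul_of_nonneg_right this hhpos.le
  refine ⟨gronB K n₀, ?_⟩
  intro φ P hPc hP0 hφm hφ0 hMex hineq
  obtain ⟨M, hM⟩ := hMex
  set m : ℝ → ℝ := fun t => sSup (φ '' Icc 0 t) with hm_def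
  have hPnn : ∀ x : ℝ, 0 ≤ x → 0 ≤ P.eval x := by
    intro x hx
    have h0 : P.eval 0 = 0 := by simp [Polynomial.eval_zero, ← Polynomial.coeff_zero_eq_eval_zero, hP0]
    calc (0:ℝ) = P.eval 0 := h0.symm
    _ ≤ P.eval x := polyMono P hPc le_rfl hx
  have hbdd : ∀ t : ℝ, t ≤ T → BddAbove (φ '' Icc 0 t) := by
    intro t ht
    exact ⟨M, fun y hy => by
      obtain ⟨s, hs, rfl⟩ := hy
      exact hM s ⟨hs.1, hs.2.trans ht⟩⟩
  have hne : ∀ t : ℝ, 0 ≤ t → (φ '' Icc 0 t).Nonempty :=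
    fun t ht => ⟨φ 0, mem_image_of_mem _ ⟨le_rfl, ht⟩⟩
  have hmem : ∀ t ∈ Icc (0:ℝ) T, ∀ s ∈ Icc (0:ℝ) t, φ s ≤ m t := by
    intro t ht s hs
    exact le_csSup (hbdd t ht.2) (mem_image_of_mem _ hs)
  have hm_nonneg : ∀ t ∈ Icc (0:ℝ) T, 0 ≤ m t := by
    intro t ht
    exact (hφ0 0 ⟨le_rfl, hT.le⟩).trans (hmem t ht 0 ⟨le_rfl, ht.1⟩)
  have hm_mono : ∀ s t : ℝ, 0 ≤ s → s ≤ t → t ≤ T → m s ≤ m t := by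
    intro s t hs hst ht
    exact csSup_le_csSup (hbdd t ht) (hne s hs) (image_mono (Icc_subset_Icc le_rfl hst))
  have hm_le : ∀ t : ℝ, 0 ≤ t → ∀ X : ℝ, (∀ s ∈ Icc (0:ℝ) t, φ s ≤ X) → m t ≤ X := by
    intro t ht X hX
    apply csSup_le (hne t ht)
    rintro y ⟨s, hs, rfl⟩
    exact hX s hs
  -- the key one-step estimate
  have step : ∀ t ∈ Icc (0:ℝ) T,
      φ t ≤ (φ 0 + P.eval t) + (1/2) * m t + K * m (max (t - h) 0) := by
    intro t ht
    set a : ℝ := max (t - h) 0 with ha_def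
    have ha0 : 0 ≤ a := le_max_right _ _
    have hat : a ≤ t := max_le (by linarith [hhpos]) ht.1
    have haT : a ≤ T := hat.trans ht.2
    have htah : t - a ≤ h := by
      rcases le_total (t - h) 0 with h' | h'
      · rw [ha_def, max_eq_right h']; linarith
      · rw [ha_def, max_eq_left h']; linarith
    have hker_nonneg : ∀ s, s ≤ t → (0:ℝ) ≤ (t - s) ^ (θ - 1) :=
      fun s hs => Real.rpow_nonneg (by linarith) _
    -- integrability
    have hkint : IntervalIntegrable (fun s => (t - s) ^ (θ - 1)) volume 0 t := by
      have := (intervalIntegral.intervalIntegrable_rpow' (a := 0) (b := t) (r := θ - 1)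
        (by linarith)).comp_sub_left t
      simpa using this.symm
    set M' : ℝ := max M 0 with hM'_def
    have hgint : IntervalIntegrable (fun s => M' * (t - s) ^ (θ - 1)) volume 0 t :=
      hkint.const_mul M'
    have hint : IntervalIntegrable (fun s => (t - s) ^ (θ - 1) * φ s) volume 0 t := by
      apply hgint.mono_fun'
      · rw [uIoc_of_le ht.1]
        exact hkint.aestronglyMeasurable.mul hφm.aestronglyMeasurable.restrict
      · rw [Filter.EventuallyLE, ae_restrict_iff' measurableSet_uIoc]
        apply Filter.Eventually.of_forall
        intro s hs
        rw [uIoc_of_le ht.1] at hs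
        have hs0 : 0 ≤ φ s := hφ0 s ⟨hs.1.le, hs.2.trans ht.2⟩
        have hsM : φ s ≤ M' := (hM s ⟨hs.1.le, hs.2.trans ht.2⟩).trans (le_max_left _ _)
        have hk := hker_nonneg s hs.2
        rw [Real.norm_eq_abs, abs_of_nonneg (mul_nonneg hk hs0)]
        exact mul_le_mul_of_nonneg_left hsM hk |>.trans (by rw [mul_comm])
    have hint1 : IntervalIntegrable (fun s => (t - s) ^ (θ - 1) * φ s) volume 0 a :=
      hint.mono_set (by rw [uIcc_of_le ha0, uIcc_of_le ht.1]; exact Icc_subset_Icc le_rfl hat)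
    have hint2 : IntervalIntegrable (fun s => (t - s) ^ (θ - 1) * φ s) volume a t :=
      hint.mono_set (by rw [uIcc_of_le hat, uIcc_of_le ht.1]; exact Icc_subset_Icc ha0 le_rfl)
    have hsplit : (∫ s in (0:ℝ)..t, (t - s) ^ (θ - 1) * φ s)
        = (∫ s in (0:ℝ)..a, (t - s) ^ (θ - 1) * φ s)
          + ∫ s in a..t, (t - s) ^ (θ - 1) * φ s :=
      (intervalIntegral.integral_add_adjacent_intervals hint1 hint2).symm
    -- kernel integral value
    have hkerval : (∫ s in a..t, (t - s) ^ (θ - 1)) = (t - a) ^ θ / θ := by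
      rw [intervalIntegral.integral_comp_sub_left (fun x => x ^ (θ - 1)) t, sub_self]
      rw [integral_rpow (Or.inl (by linarith))]
      rw [Real.zero_rpow (by linarith : θ - 1 + 1 ≠ 0)]
      norm_num
    -- bound near t
    have hb2 : (∫ s in a..t, (t - s) ^ (θ - 1) * φ s) ≤ (t - a) ^ θ / θ * m t := by
      have : (∫ s in a..t, (t - s) ^ (θ - 1) * φ s)
          ≤ ∫ s in a..t, (t - s) ^ (θ - 1) * m t := by
        apply intervalIntegral.integral_mono_on hat hint2 (hkint.mono_set
          (by rw [uIcc_of_le hat, uIcc_of_le ht.1]; exact Icc_subset_Icc ha0 le_rfl)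
          |>.mul_const _)
        intro s hs
        exact mul_le_mul_of_nonneg_left (hmem t ht s ⟨ha0.trans hs.1, hs.2⟩)
          (hker_nonneg s hs.2)
      rw [intervalIntegral.integral_mul_const, hkerval] at this
      exact this
    -- bound away from t
    have hb1 : (∫ s in (0:ℝ)..a, (t - s) ^ (θ - 1) * φ s) ≤ h ^ (θ - 1) * T * m a := by
      rcases eq_or_lt_of_le ha0 with h' | h'
      · rw [← h', intervalIntegral.integral_same]
        have h0 : (0:ℝ) ≤ m 0 := by have := hm_nonneg a ⟨ha0, haT⟩; rwa [← h'] at this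
        exact mul_nonneg (by positivity) h0
      · have hta : t - h = a := by
          rcases le_total (t - h) 0 with h'' | h''
          · exfalso; rw [ha_def, max_eq_right h''] at h'; exact lt_irrefl 0 h'
          · rw [ha_def, max_eq_left h'']
        have : (∫ s in (0:ℝ)..a, (t - s) ^ (θ - 1) * φ s)
            ≤ ∫ s in (0:ℝ)..a, h ^ (θ - 1) * m a := by
          apply intervalIntegral.integral_mono_on ha0 hint1 intervalIntegrable_const
          intro s hs
          have hts : h ≤ t - s := by
            have hsa : s ≤ a := hs.2
            rw [← hta] at hsa; linarith
          have hk : (t - s) ^ (θ - 1) ≤ h ^ (θ - 1) :=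
            Real.rpow_le_rpow_of_nonpos hhpos hts (by linarith)
          have hφs : φ s ≤ m a := hmem a ⟨ha0, haT⟩ s hs
          have := hm_nonneg a ⟨ha0, haT⟩
          have := hφ0 s ⟨hs.1, (hs.2.trans hat).trans ht.2⟩
          calc (t - s) ^ (θ - 1) * φ s ≤ h ^ (θ - 1) * φ s :=
                mul_le_mul_of_nonneg_right hk (by linarith)
          _ ≤ h ^ (θ - 1) * m a := mul_le_mul_of_nonneg_left hφs (by positivity)
        rw [intervalIntegral.integral_const, smul_eq_mul, sub_zero] at this
        refine this.trans ?_
        have hma := hm_nonneg a ⟨ha0, haT⟩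
        nlinarith [mul_nonneg (mul_nonneg (sub_nonneg.2 haT) (Real.rpow_nonneg hhpos.le (θ - 1))) hma]
    -- combine
    have hcomb := hineq t ht
    rw [hsplit] at hcomb
    have hmt := hm_nonneg t ht
    have hma := hm_nonneg a ⟨ha0, haT⟩
    have htaθ : (t - a) ^ θ ≤ h ^ θ :=
      Real.rpow_le_rpow (by linarith) htah hθ0.le
    have hhalf' : c * ((t - a) ^ θ / θ) ≤ 1 / 2 := by
      calc c * ((t - a) ^ θ / θ) = c * (t - a) ^ θ / θ := by ring
      _ ≤ c * h ^ θ / θ := by gcongr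
      _ = 1 / 2 := hhalf
    calc φ t ≤ φ 0 + P.eval t + c * ((∫ s in (0:ℝ)..a, (t - s) ^ (θ - 1) * φ s)
          + ∫ s in a..t, (t - s) ^ (θ - 1) * φ s) := hcomb
    _ ≤ φ 0 + P.eval t + c * (h ^ (θ - 1) * T * m a + (t - a) ^ θ / θ * m t) := by
        nlinarith [hb1, hb2]
    _ ≤ (φ 0 + P.eval t) + (1/2) * m t + K * m a := by
        have h1 : c * ((t - a) ^ θ / θ * m t) ≤ (1/2) * m t := by
          have := mul_le_mul_of_nonneg_right hhalf' hmt
          nlinarith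
        have h2 : c * (h ^ (θ - 1) * T * m a) = K * m a := by rw [hK_def]; ring
        nlinarith
  -- induction
  have hφ0nn : 0 ≤ φ 0 := hφ0 0 ⟨le_rfl, hT.le⟩
  have main : ∀ n : ℕ, ∀ t ∈ Icc (0:ℝ) T, t ≤ n * h →
      m t ≤ gronB K n * (φ 0 + P.eval t) := by
    intro n
    induction n with
    | zero =>
      intro t ht ht0
      norm_num at ht0
      have ht0' : t = 0 := le_antisymm ht0 ht.1
      subst ht0'
      have : m 0 ≤ φ 0 := hm_le 0 le_rfl (φ 0) (by
        intro s hs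
        have : s = 0 := le_antisymm hs.2 hs.1
        rw [this])
      have hP0' : P.eval 0 = 0 := by
        simp [← Polynomial.coeff_zero_eq_eval_zero, hP0]
      simp [gronB, hP0']
      exact this
    | succ n ih =>
      intro t ht htn
      set a : ℝ := max (t - h) 0 with ha_def
      have ha0 : 0 ≤ a := le_max_right _ _
      have hat : a ≤ t := max_le (by linarith [hhpos]) ht.1
      have haT : a ≤ T := hat.trans ht.2
      have han : a ≤ n * h := by
        apply max_le
        · push_cast at htn ⊢; linarith
        · positivity
      have hIH : m a ≤ gronB K n * (φ 0 + P.eval t) := by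
        refine (ih a ⟨ha0, haT⟩ han).trans ?_
        apply mul_le_mul_of_nonneg_left _ (by linarith [gronB_ge_one hK n])
        have := polyMono P hPc ha0 hat
        linarith
      have hX : m t ≤ (φ 0 + P.eval t) + (1/2) * m t
          + K * (gronB K n * (φ 0 + P.eval t)) := by
        apply hm_le t ht.1
        intro s hs
        have hsT : s ∈ Icc (0:ℝ) T := ⟨hs.1, hs.2.trans ht.2⟩
        refine (step s hsT).trans ?_
        have hmono1 : P.eval s ≤ P.eval t := polyMono P hPc hs.1 hs.2
        have hmono2 : m s ≤ m t := hm_mono s t hs.1 hs.2 ht.2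
        have hmono3 : m (max (s - h) 0) ≤ m a := by
          apply hm_mono _ _ (le_max_right _ _) _ haT
          exact max_le_max (by linarith [hs.2]) le_rfl
        have := mul_le_mul_of_nonneg_left (hmono3.trans hIH) hK
        linarith
      have hmt := hm_nonneg t ht
      have : gronB K (n+1) * (φ 0 + P.eval t) = 2 * (1 + K * gronB K n) * (φ 0 + P.eval t) := by
        simp [gronB]
      rw [this]
      nlinarith
  intro t ht
  have h1 : φ t ≤ m t := hmem t ht t ⟨ht.1, le_rfl⟩
  have h2 : m t ≤ gronB K n₀ * (φ 0 + P.eval t) := main n₀ t ht (ht.2.trans hn₀)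
  nlinarith [h1, h2]
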